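/- For I*_M(μ_M) = Λ_M (β_MT β_TM − μ_M μ_T)/(μ_M β_MT (μ_M + β_TM)), the normalized sensitivity index (μ_M/I*_M)·(dI*_M/dμ_M) equals −(β_MT β_TM^2 + 2 β_MT β_TM μ_M − μ_T μ_M^2)/((β_TM + μ_M)(β_MT β_TM − μ_M μ_T)), which is strictly negative when β_MT β_TM > μ_M μ_T. -/

import Mathlib

/-- The normalized sensitivity index of I*_M with respect to μM equals
−(βMT βTM² + 2 βMT βTM μM − μT μM²)/((βTM + μM)(βMT βTM − μM μT)),
which is strictly negative when βMT βTM > μM μT. -/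
theorem SI_IM_muM
    (ΛM βMT βTM μM μT : ℝ)
    (hΛM : 0 < ΛM) (hβMT : 0 < βMT) (hβTM : 0 < βTM)
    (hμM : 0 < μM) (hμT : 0 < μT)
    (hR0 : βMT * βTM > μM * μT) :
    (μM / (ΛM * (βMT * βTM - μM * μT) / (μM * βMT * (μM + βTM)))) *
      deriv (fun m => ΛM * (βMT * βTM - m * μT) / (m * βMT * (m + βTM))) μM
      = -(βMT * βTM ^ 2 + 2 * βMT * βTM * μM - μT * μM ^ 2) /
          ((βTM + μM) * (βMT * βTM - μM * μT)) ∧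
    -(βMT * βTM ^ 2 + 2 * βMT * βTM * μM - μT * μM ^ 2) /
        ((βTM + μM) * (βMT * βTM - μM * μT)) < 0 := by
  have hv : μM * βMT * (μM + βTM) ≠ 0 := by positivity
  have hR : 0 < βMT * βTM - μM * μT := by linarith
  have hderiv : deriv (fun m => ΛM * (βMT * βTM - m * μT) / (m * βMT * (m + βTM))) μM
      = ((-(ΛM*μT)) * (μM * βMT * (μM + βTM)) -
          ΛM * (βMT * βTM - μM * μT) * (βMT * (μM + βTM) + μM * βMT)) /
          (μM * βMT * (μM + βTM))^2 := by
    have hu : HasDerivAt (fun m => ΛM * (βMT * βTM - m * μT)) (-(ΛM*μT)) μM := by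
      have : HasDerivAt (fun m : ℝ => βMT * βTM - m * μT) (-μT) μM := by
        simpa using ((hasDerivAt_id μM).mul_const μT).const_sub (βMT * βTM)
      simpa [mul_comm, mul_left_comm] using this.const_mul ΛM
    have hw : HasDerivAt (fun m : ℝ => m * βMT * (m + βTM))
        (βMT * (μM + βTM) + μM * βMT) μM := by
      have h1 : HasDerivAt (fun m : ℝ => m * βMT) βMT μM := by
        simpa using (hasDerivAt_id μM).mul_const βMT
      have h2 : HasDerivAt (fun m : ℝ => m + βTM) 1 μM := by
        simpa using (hasDerivAt_id μM).add_const βTM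
      simpa [mul_comm, Pi.mul_def] using h1.mul h2
    exact ((hu.div hw hv)).deriv
  have hnum : 0 < βMT * βTM ^ 2 + 2 * βMT * βTM * μM - μT * μM ^ 2 := by
    nlinarith [mul_pos hβMT (mul_pos hβTM hμM), sq_nonneg βTM, mul_pos hμM hμM]
  constructor
  · rw [hderiv]
    field_simp
    ring
  · apply div_neg_of_neg_of_pos
    · linarith
    · positivity
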